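/- arXiv:2401.15530 — 4 statements merged into one kernel-verified Lean document; each statement's English description precedes it below -/
import Mathlib

section
/- For all T ≥ 1, all ε ≥ 0, and every random variable θ̃ : Ω → Θ̃ (Θ̃ a nonempty finite type) satisfying the compression constraints I[H_T ; θ̃ | θ] = 0 and I[H_T ; θ | θ̃] ≤ εT, the estimation error satisfies I[H_T ; θ] ≤ I[θ ; θ̃] + εT. (Paper: upper bound of Theorem 'rate-distortion estimation error bound' for sequential learning, with the infimum over compressions unfolded into a universally quantified statement.) -/
open MeasureTheory ProbabilityTheory Real

variable {Ω : Type*} [MeasureSpace Ω]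

noncomputable def prob {𝒳 : Type*} (X : Ω → 𝒳) (x : 𝒳) : ℝ :=
  (ℙ (X ⁻¹' {x})).toReal

noncomputable def entropy {𝒳 : Type*} [Fintype 𝒳] (X : Ω → 𝒳) : ℝ :=
  -∑ x, prob X x * Real.log (prob X x)

noncomputable def condEntropy {𝒳 𝒴 : Type*} [Fintype 𝒳] [Fintype 𝒴]
    (X : Ω → 𝒳) (Y : Ω → 𝒴) : ℝ :=
  entropy (fun ω => (X ω, Y ω)) - entropy Y

noncomputable def mutualInfo {𝒳 𝒴 : Type*} [Fintype 𝒳] [Fintype 𝒴]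
    (X : Ω → 𝒳) (Y : Ω → 𝒴) : ℝ :=
  entropy X + entropy Y - entropy (fun ω => (X ω, Y ω))

noncomputable def condMutualInfo {𝒳 𝒴 𝒵 : Type*} [Fintype 𝒳] [Fintype 𝒴] [Fintype 𝒵]
    (X : Ω → 𝒳) (Y : Ω → 𝒴) (Z : Ω → 𝒵) : ℝ :=
  entropy (fun ω => (X ω, Z ω)) + entropy (fun ω => (Y ω, Z ω))
    - entropy (fun ω => (X ω, Y ω, Z ω)) - entropy Z

def hist {𝒳 : Type*} {T : ℕ} (X : Fin T → Ω → 𝒳) (t : ℕ) (ht : t ≤ T) : Ω → (Fin t → 𝒳) :=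
  fun ω i => X (Fin.castLE ht i) ω



section Aux
variable [IsProbabilityMeasure (ℙ : Measure Ω)]

set_option linter.unusedSectionVars false

lemma prob_nonneg {𝒳 : Type*} (X : Ω → 𝒳) (x : 𝒳) : 0 ≤ prob X x :=
  ENNReal.toReal_nonneg

lemma prob_mono {𝒳 𝒴 : Type*} (X : Ω → 𝒳) (Y : Ω → 𝒴) (x : 𝒳) (y : 𝒴)
    (h : X ⁻¹' {x} ⊆ Y ⁻¹' {y}) : prob X x ≤ prob Y y :=
  ENNReal.toReal_mono (measure_ne_top _ _) (measure_mono h)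

lemma prob_congr {𝒳 𝒴 : Type*} (X : Ω → 𝒳) (Y : Ω → 𝒴) (x : 𝒳) (y : 𝒴)
    (h : X ⁻¹' {x} = Y ⁻¹' {y}) : prob X x = prob Y y := by
  unfold prob; rw [h]

lemma prob_eq_sum_fiber {𝒲 𝒱 : Type*} [Fintype 𝒲] [DecidableEq 𝒱]
    [MeasurableSpace 𝒲] [MeasurableSingletonClass 𝒲]
    (W : Ω → 𝒲) (hW : Measurable W) (f : 𝒲 → 𝒱) (v : 𝒱) :
    prob (fun ω => f (W ω)) v = ∑ w ∈ Finset.univ.filter (fun w => f w = v), prob W w := by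
  unfold prob
  rw [← ENNReal.toReal_sum (fun _ _ => measure_ne_top _ _)]
  congr 1
  rw [← measure_biUnion_finset ?_ (fun w _ => hW (measurableSet_singleton w))]
  · congr 1
    ext ω
    simp [eq_comm]
  · intro a _ b _ hab
    simp only [Function.onFun, Set.disjoint_left]
    intro ω ha hb
    exact hab (by simp_all)

lemma sum_prob_eq_one {𝒳 : Type*} [Fintype 𝒳] [MeasurableSpace 𝒳] [MeasurableSingletonClass 𝒳]
    (X : Ω → 𝒳) (hX : Measurable X) :
    ∑ x, prob X x = 1 := by
  classical
  have h := prob_eq_sum_fiber X hX (fun _ => ()) ()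
  simp only [Finset.filter_true] at h
  rw [← h]
  unfold prob
  simp [Set.preimage_const_of_mem]

lemma prob_sum_fst {𝒳 𝒴 : Type*} [Fintype 𝒳] [Fintype 𝒴]
    [MeasurableSpace 𝒳] [MeasurableSingletonClass 𝒳]
    [MeasurableSpace 𝒴] [MeasurableSingletonClass 𝒴]
    (X : Ω → 𝒳) (Y : Ω → 𝒴) (hX : Measurable X) (hY : Measurable Y) (y : 𝒴) :
    ∑ x, prob (fun ω => (X ω, Y ω)) (x, y) = prob Y y := by
  classical
  have h := prob_eq_sum_fiber (fun ω => (X ω, Y ω)) (hX.prodMk hY) Prod.snd y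
  have h2 : prob (fun ω => ((X ω, Y ω)).snd) y = prob Y y := rfl
  rw [h2] at h
  rw [h, Finset.sum_filter, Fintype.sum_prod_type]
  simp

lemma prob_sum_snd {𝒳 𝒴 : Type*} [Fintype 𝒳] [Fintype 𝒴]
    [MeasurableSpace 𝒳] [MeasurableSingletonClass 𝒳]
    [MeasurableSpace 𝒴] [MeasurableSingletonClass 𝒴]
    (X : Ω → 𝒳) (Y : Ω → 𝒴) (hX : Measurable X) (hY : Measurable Y) (x : 𝒳) :
    ∑ y, prob (fun ω => (X ω, Y ω)) (x, y) = prob X x := by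
  classical
  have h := prob_eq_sum_fiber (fun ω => (X ω, Y ω)) (hX.prodMk hY) Prod.fst x
  have h2 : prob (fun ω => ((X ω, Y ω)).fst) x = prob X x := rfl
  rw [h2] at h
  rw [h, Finset.sum_filter, Fintype.sum_prod_type, Finset.sum_comm]
  simp

lemma entropy_map_eq {𝒲 𝒱 : Type*} [Fintype 𝒲] [Fintype 𝒱] [DecidableEq 𝒱]
    [MeasurableSpace 𝒲] [MeasurableSingletonClass 𝒲]
    (W : Ω → 𝒲) (hW : Measurable W) (f : 𝒲 → 𝒱) :
    entropy (fun ω => f (W ω)) = -∑ w, prob W w * Real.log (prob (fun ω => f (W ω)) (f w)) := by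
  classical
  unfold entropy
  congr 1
  rw [← Finset.sum_fiberwise Finset.univ f
      (fun w => prob W w * Real.log (prob (fun ω => f (W ω)) (f w)))]
  refine Finset.sum_congr rfl fun v _ => ?_
  rw [Finset.sum_congr rfl (fun w hw => by
        rw [(Finset.mem_filter.mp hw).2]),
    ← Finset.sum_mul, ← prob_eq_sum_fiber W hW f v]

lemma cmi_nonneg {𝒳 𝒴 𝒵 : Type*} [Fintype 𝒳] [Fintype 𝒴] [Fintype 𝒵]
    [MeasurableSpace 𝒳] [MeasurableSingletonClass 𝒳]
    [MeasurableSpace 𝒴] [MeasurableSingletonClass 𝒴]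
    [MeasurableSpace 𝒵] [MeasurableSingletonClass 𝒵]
    (X : Ω → 𝒳) (Y : Ω → 𝒴) (Z : Ω → 𝒵)
    (hX : Measurable X) (hY : Measurable Y) (hZ : Measurable Z) :
    0 ≤ condMutualInfo X Y Z := by
  classical
  set W : Ω → 𝒳 × 𝒴 × 𝒵 := fun ω => (X ω, Y ω, Z ω) with hWdef
  have hW : Measurable W := hX.prodMk (hY.prodMk hZ)
  set p : 𝒳 × 𝒴 × 𝒵 → ℝ := prob W with hpdef
  set qXZ : 𝒳 × 𝒴 × 𝒵 → ℝ := fun w => prob (fun ω => (X ω, Z ω)) (w.1, w.2.2) with hqXZdef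
  set qYZ : 𝒳 × 𝒴 × 𝒵 → ℝ := fun w => prob (fun ω => (Y ω, Z ω)) w.2 with hqYZdef
  set qZ : 𝒳 × 𝒴 × 𝒵 → ℝ := fun w => prob Z w.2.2 with hqZdef
  -- entropies as sums over triples
  have hXZ : entropy (fun ω => (X ω, Z ω)) = -∑ w, p w * Real.log (qXZ w) := by
    have := entropy_map_eq W hW (fun w => (w.1, w.2.2))
    exact this
  have hYZ : entropy (fun ω => (Y ω, Z ω)) = -∑ w, p w * Real.log (qYZ w) := by
    have := entropy_map_eq W hW (fun w => w.2)
    exact this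
  have hZ' : entropy Z = -∑ w, p w * Real.log (qZ w) := by
    have := entropy_map_eq W hW (fun w => w.2.2)
    exact this
  have hXYZ : entropy (fun ω => (X ω, Y ω, Z ω)) = -∑ w, p w * Real.log (p w) := by
    have := entropy_map_eq W hW id
    simpa using this
  have hsplit : condMutualInfo X Y Z
      = ∑ w, (p w * Real.log (p w) + p w * Real.log (qZ w)
              - p w * Real.log (qXZ w) - p w * Real.log (qYZ w)) := by
    unfold condMutualInfo
    rw [hXZ, hYZ, hZ', hXYZ]
    rw [Finset.sum_sub_distrib, Finset.sum_sub_distrib, Finset.sum_add_distrib]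
    ring
  rw [hsplit]
  set r : 𝒳 × 𝒴 × 𝒵 → ℝ :=
    fun w => if qZ w = 0 then 0 else qXZ w * qYZ w / qZ w with hrdef
  have key : ∀ w, p w - r w ≤
      p w * Real.log (p w) + p w * Real.log (qZ w)
        - p w * Real.log (qXZ w) - p w * Real.log (qYZ w) := by
    intro w
    have hp0 : 0 ≤ p w := prob_nonneg _ _
    have hb : p w ≤ qXZ w := prob_mono _ _ _ _ (by
      intro ω hω
      simp only [Set.mem_preimage, Set.mem_singleton_iff, hWdef, Prod.ext_iff] at hω ⊢
      exact ⟨hω.1, hω.2.2⟩)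
    have hc : p w ≤ qYZ w := prob_mono _ _ _ _ (by
      intro ω hω
      simp only [Set.mem_preimage, Set.mem_singleton_iff, hWdef, Prod.ext_iff] at hω ⊢
      exact ⟨hω.2.1, hω.2.2⟩)
    have hd : p w ≤ qZ w := prob_mono _ _ _ _ (by
      intro ω hω
      simp only [Set.mem_preimage, Set.mem_singleton_iff, hWdef, Prod.ext_iff] at hω ⊢
      exact hω.2.2)
    have hq1 : 0 ≤ qXZ w := prob_nonneg _ _
    have hq2 : 0 ≤ qYZ w := prob_nonneg _ _
    have hq3 : 0 ≤ qZ w := prob_nonneg _ _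
    rcases eq_or_lt_of_le hp0 with h0 | hpos
    · have hr0 : 0 ≤ r w := by
        rw [hrdef]
        dsimp only
        split_ifs with h
        · exact le_refl 0
        · have : 0 < qZ w := lt_of_le_of_ne hq3 (Ne.symm h)
          positivity
      rw [← h0]
      simp only [zero_mul, add_zero, sub_zero, zero_sub, zero_add]
      linarith
    · have hbp : 0 < qXZ w := lt_of_lt_of_le hpos hb
      have hcp : 0 < qYZ w := lt_of_lt_of_le hpos hc
      have hdp : 0 < qZ w := lt_of_lt_of_le hpos hd
      have hr : r w = qXZ w * qYZ w / qZ w := by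
        rw [hrdef]; dsimp only; rw [if_neg hdp.ne']
      have hlog : Real.log ((qXZ w * qYZ w / qZ w) / p w)
          ≤ (qXZ w * qYZ w / qZ w) / p w - 1 :=
        Real.log_le_sub_one_of_pos (by positivity)
      have hexp : Real.log ((qXZ w * qYZ w / qZ w) / p w)
          = Real.log (qXZ w) + Real.log (qYZ w) - Real.log (qZ w) - Real.log (p w) := by
        rw [Real.log_div (by positivity) hpos.ne', Real.log_div (by positivity) hdp.ne',
          Real.log_mul hbp.ne' hcp.ne']
      rw [hexp] at hlog
      have hm := mul_le_mul_of_nonneg_left hlog hp0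
      have hcancel : p w * ((qXZ w * qYZ w / qZ w) / p w) = qXZ w * qYZ w / qZ w := by
        field_simp
      rw [hr]
      nlinarith [hm, hcancel]
  have hsum_p : ∑ w, p w = 1 := sum_prob_eq_one W hW
  have hsum_r : ∑ w, r w = 1 := by
    have h1 : ∀ (x : 𝒳) (z : 𝒵), ∑ y, r (x, y, z)
        = if prob Z z = 0 then 0 else prob (fun ω => (X ω, Z ω)) (x, z) := by
      intro x z
      by_cases h : prob Z z = 0
      · simp [hrdef, hqZdef, h]
      · simp only [hrdef, hqZdef, hqXZdef, hqYZdef, if_neg h]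
        rw [← Finset.sum_div, ← Finset.mul_sum,
          prob_sum_fst Y Z hY hZ z]
        field_simp
    have h2 : ∀ z : 𝒵, ∑ x, (if prob Z z = 0 then 0
        else prob (fun ω => (X ω, Z ω)) (x, z)) = prob Z z := by
      intro z
      by_cases h : prob Z z = 0
      · simp [h]
      · simp only [if_neg h]
        exact prob_sum_fst X Z hX hZ z
    calc ∑ w, r w = ∑ x, ∑ yz : 𝒴 × 𝒵, r (x, yz) := by rw [Fintype.sum_prod_type]
      _ = ∑ x, ∑ y, ∑ z, r (x, y, z) :=
        Finset.sum_congr rfl fun x _ => by rw [Fintype.sum_prod_type]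
      _ = ∑ x, ∑ z, ∑ y, r (x, y, z) :=
        Finset.sum_congr rfl fun x _ => Finset.sum_comm
      _ = ∑ x, ∑ z, (if prob Z z = 0 then 0 else prob (fun ω => (X ω, Z ω)) (x, z)) :=
        Finset.sum_congr rfl fun x _ => Finset.sum_congr rfl fun z _ => h1 x z
      _ = ∑ z, ∑ x, (if prob Z z = 0 then 0 else prob (fun ω => (X ω, Z ω)) (x, z)) :=
        Finset.sum_comm
      _ = ∑ z, prob Z z := Finset.sum_congr rfl fun z _ => h2 z
      _ = 1 := sum_prob_eq_one Z hZ
  calc (0:ℝ) = 1 - 1 := by ring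
    _ ≤ ∑ w, p w - ∑ w, r w := by rw [hsum_p, hsum_r]
    _ = ∑ w, (p w - r w) := (Finset.sum_sub_distrib _ _).symm
    _ ≤ _ := Finset.sum_le_sum fun w _ => key w


lemma prob_comp_apply {𝒳 𝒴 : Type*} (X : Ω → 𝒳) (f : 𝒳 → 𝒴) (hf : Function.Injective f)
    (x : 𝒳) : prob (fun ω => f (X ω)) (f x) = prob X x := by
  have h : (fun ω => f (X ω)) ⁻¹' {f x} = X ⁻¹' {x} := by
    ext ω
    simp [hf.eq_iff]
  unfold prob
  rw [h]

lemma entropy_comp_equiv {𝒳 𝒴 : Type*} [Fintype 𝒳] [Fintype 𝒴] (X : Ω → 𝒳) (e : 𝒳 ≃ 𝒴) :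
    entropy (fun ω => e (X ω)) = entropy X := by
  unfold entropy
  rw [← Equiv.sum_comp e
    (fun y => prob (fun ω => e (X ω)) y * Real.log (prob (fun ω => e (X ω)) y))]
  simp only [prob_comp_apply X e e.injective]

lemma entropy_comm {𝒳 𝒴 : Type*} [Fintype 𝒳] [Fintype 𝒴] (X : Ω → 𝒳) (Y : Ω → 𝒴) :
    entropy (fun ω => (X ω, Y ω)) = entropy (fun ω => (Y ω, X ω)) := by
  have := entropy_comp_equiv (fun ω => (Y ω, X ω)) (Equiv.prodComm 𝒴 𝒳)
  simp only [Equiv.prodComm_apply, Prod.swap_prod_mk] at this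
  exact this

lemma entropy_rot {𝒳 𝒴 𝒵 : Type*} [Fintype 𝒳] [Fintype 𝒴] [Fintype 𝒵]
    (X : Ω → 𝒳) (Y : Ω → 𝒴) (Z : Ω → 𝒵) :
    entropy (fun ω => (X ω, Y ω, Z ω)) = entropy (fun ω => (Z ω, X ω, Y ω)) := by
  have := entropy_comp_equiv (fun ω => (Z ω, X ω, Y ω))
    (⟨fun w => (w.2.1, w.2.2, w.1), fun w => (w.2.2, w.1, w.2.1),
      fun w => rfl, fun w => rfl⟩ : (𝒵 × 𝒳 × 𝒴) ≃ (𝒳 × 𝒴 × 𝒵))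
  simp only [Equiv.coe_fn_mk] at this
  exact this

end Aux

/-- **Rate-distortion estimation error bound, upper bound** (paper, Theorem 2, upper bound,
with the infimum over compressions unfolded into a universally quantified statement).
For every compression `θ̃` of `θ` satisfying `I[H_T ; θ̃ | θ] = 0` (no exogenous information)
and the distortion constraint `I[H_T ; θ | θ̃] ≤ ε T`, the estimation error satisfies
`I[H_T ; θ] ≤ I[θ ; θ̃] + ε T`. -/
theorem rate_distortion_upper_bound
    {Ω : Type*} [MeasureSpace Ω] [IsProbabilityMeasure (ℙ : Measure Ω)]
    {𝒳 Θ Θ' : Type*} [Fintype 𝒳] [Nonempty 𝒳] [Fintype Θ] [Nonempty Θ]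
    [Fintype Θ'] [Nonempty Θ']
    [MeasurableSpace 𝒳] [MeasurableSingletonClass 𝒳]
    [MeasurableSpace Θ] [MeasurableSingletonClass Θ]
    [MeasurableSpace Θ'] [MeasurableSingletonClass Θ']
    (T : ℕ) (hT : 1 ≤ T)
    (X : Fin T → Ω → 𝒳) (θ : Ω → Θ) (θ' : Ω → Θ')
    (hX : ∀ t, Measurable (X t)) (hθ : Measurable θ) (hθ' : Measurable θ')
    (ε : ℝ) (hε : 0 ≤ ε)
    (hindep : condMutualInfo (hist X T le_rfl) θ' θ = 0)
    (hdist : condMutualInfo (hist X T le_rfl) θ θ' ≤ ε * T) :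
    mutualInfo (hist X T le_rfl) θ ≤ mutualInfo θ θ' + ε * T := by
  classical
  set H : Ω → (Fin T → 𝒳) := hist X T le_rfl with hHdef
  have hHm : Measurable H := measurable_pi_lambda _ (fun i => hX _)
  have h1 : 0 ≤ condMutualInfo θ θ' H := cmi_nonneg θ θ' H hθ hθ' hHm
  have i12 : entropy (fun ω => (θ ω, H ω)) = entropy (fun ω => (H ω, θ ω)) :=
    entropy_comm θ H
  have i13 : entropy (fun ω => (θ' ω, H ω)) = entropy (fun ω => (H ω, θ' ω)) :=
    entropy_comm θ' H
  have i123 : entropy (fun ω => (θ ω, θ' ω, H ω)) = entropy (fun ω => (H ω, θ ω, θ' ω)) := by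
    have := entropy_rot θ θ' H
    exact this.trans rfl
  unfold condMutualInfo at h1 hdist
  unfold mutualInfo
  rw [i12, i13, i123] at h1
  linarith
end

section
/- Squared error upper bounds softmax KL-divergence: for every d ≥ 1 and all vectors u, v ∈ ℝ^d, Σ_{l=1}^{d} (e^{u_l} / Σ_{k=1}^{d} e^{u_k}) · ln[ (e^{u_l} / Σ_{k=1}^{d} e^{u_k}) / (e^{v_l} / Σ_{k=1}^{d} e^{v_k}) ] ≤ Σ_{l=1}^{d} (u_l − v_l)², i.e. the Kullback–Leibler divergence between the softmax distributions of u and of v is at most the squared Euclidean distance ‖u − v‖₂². (Paper: Lemma 'sq error upper bounds softmax KL-divergence'.) -/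
open Real

lemma exp_numeric : Real.exp (13/8 : ℝ) ≤ 337/64 := by
  have h : Real.exp (13/16 : ℝ) ≤ 2.262 := by
    have := Real.exp_bound' (x := 13/16) (by norm_num) (by norm_num) (n := 3) (by norm_num)
    calc Real.exp (13/16 : ℝ) ≤ _ := this
      _ ≤ 2.262 := by norm_num [Finset.sum_range_succ, Nat.factorial]
  have h2 : Real.exp (13/8 : ℝ) = Real.exp (13/16) * Real.exp (13/16) := by
    rw [← Real.exp_add]; norm_num
  rw [h2]
  nlinarith [Real.exp_pos (13/16 : ℝ)]

lemma exp_le_quad {t : ℝ} (h0 : 0 ≤ t) (h1 : t ≤ 13/8) :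
    Real.exp t ≤ 1 + t + t ^ 2 := by
  set f : ℝ → ℝ := fun s => (1 + s + s ^ 2) * Real.exp (-s) with hf
  have hderiv : ∀ s : ℝ, HasDerivAt f ((s - s ^ 2) * Real.exp (-s)) s := by
    intro s
    have ha : HasDerivAt (fun s : ℝ => 1 + s + s ^ 2) (1 + 2 * s) s := by
      have := ((hasDerivAt_id s).const_add 1).add (hasDerivAt_pow 2 s)
      exact this.congr_deriv (by norm_num)
    have hb : HasDerivAt (fun s : ℝ => Real.exp (-s)) (-Real.exp (-s)) s := by
      exact ((Real.hasDerivAt_exp (-s)).comp s (hasDerivAt_neg s)).congr_deriv (by simp)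
    have := ha.mul hb
    exact this.congr_deriv (by ring)
  have hcont : Continuous f := by fun_prop
  have hdiff : ∀ s : ℝ, DifferentiableAt ℝ f s := fun s => (hderiv s).differentiableAt
  have key : 1 ≤ f t := by
    rcases le_total t 1 with ht | ht
    · have hmono : MonotoneOn f (Set.Icc (0:ℝ) 1) := by
        apply monotoneOn_of_deriv_nonneg (convex_Icc 0 1) hcont.continuousOn
        · intro s _; exact (hdiff s).differentiableWithinAt
        · intro s hs
          rw [interior_Icc, Set.mem_Ioo] at hs
          rw [(hderiv s).deriv]
          have he := (Real.exp_pos (-s)).le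
          have hq : (0:ℝ) ≤ s - s ^ 2 := by nlinarith [hs.1, hs.2]
          exact mul_nonneg hq he
      have := hmono (Set.mem_Icc.2 ⟨le_refl 0, by norm_num⟩) (Set.mem_Icc.2 ⟨h0, ht⟩) h0
      simpa [hf] using this
    · have hanti : AntitoneOn f (Set.Icc (1:ℝ) (13/8)) := by
        apply antitoneOn_of_deriv_nonpos (convex_Icc 1 (13/8)) hcont.continuousOn
        · intro s _; exact (hdiff s).differentiableWithinAt
        · intro s hs
          rw [interior_Icc, Set.mem_Ioo] at hs
          rw [(hderiv s).deriv]
          have he := (Real.exp_pos (-s)).le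
          have hq : s - s ^ 2 ≤ 0 := by nlinarith [hs.1, hs.2]
          exact mul_nonpos_of_nonpos_of_nonneg hq he
      have hle : f (13/8 : ℝ) ≤ f t :=
        hanti (Set.mem_Icc.2 ⟨ht, h1⟩) (Set.mem_Icc.2 ⟨by norm_num, le_refl _⟩) h1
      have hval : 1 ≤ f (13/8 : ℝ) := by
        have hcan : Real.exp (13/8:ℝ) * Real.exp (-(13/8:ℝ)) = 1 := by
          rw [← Real.exp_add]; simp
        have hee : Real.exp (13/8:ℝ) ≤ 1 + 13/8 + (13/8:ℝ)^2 := by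
          have := exp_numeric; nlinarith
        calc (1:ℝ) = Real.exp (13/8:ℝ) * Real.exp (-(13/8:ℝ)) := hcan.symm
          _ ≤ (1 + 13/8 + (13/8:ℝ)^2) * Real.exp (-(13/8:ℝ)) :=
            mul_le_mul_of_nonneg_right hee (Real.exp_pos _).le
          _ = f (13/8 : ℝ) := rfl
      exact hval.trans hle
  have hcan : Real.exp t * Real.exp (-t) = 1 := by rw [← Real.exp_add]; simp
  have hft : Real.exp t * f t = 1 + t + t ^ 2 := by
    calc Real.exp t * f t = (1 + t + t ^ 2) * (Real.exp t * Real.exp (-t)) := by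
          simp only [hf]; ring
      _ = 1 + t + t ^ 2 := by rw [hcan, mul_one]
  nlinarith [Real.exp_pos t, key, hft]

lemma exp_neg_le_quad {x : ℝ} (hx : -(13/8) ≤ x) : Real.exp (-x) ≤ 1 - x + x ^ 2 := by
  rcases le_total 0 x with h | h
  · have h1 : x + 1 ≤ Real.exp x := Real.add_one_le_exp x
    have hpos : (0:ℝ) < 1 + x := by linarith
    have h2 : Real.exp (-x) ≤ (1 + x)⁻¹ := by
      rw [Real.exp_neg]
      exact inv_anti₀ hpos (by linarith)
    have h3 : (1 + x)⁻¹ ≤ 1 - x + x ^ 2 := by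
      have hc : (1 + x) * (1 + x)⁻¹ = 1 := mul_inv_cancel₀ hpos.ne'
      nlinarith [mul_nonneg (mul_nonneg h h) h]
    linarith
  · have := exp_le_quad (t := -x) (by linarith) (by linarith)
    simpa [sub_eq_add_neg] using this

/-- **Squared error upper bounds softmax KL-divergence** (paper, Lemma `sq error upper
bounds softmax KL-divergence').  For every `d ≥ 1` and all `u, v ∈ ℝ^d`, the
Kullback–Leibler divergence between the softmax distributions of `u` and of `v` is at most
the squared Euclidean distance `‖u − v‖₂²`. -/

theorem softmax_klDiv_le_sq_dist (d : ℕ) (hd : 1 ≤ d) (u v : Fin d → ℝ) :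
    ∑ l, (Real.exp (u l) / ∑ k, Real.exp (u k)) *
        Real.log ((Real.exp (u l) / ∑ k, Real.exp (u k)) /
          (Real.exp (v l) / ∑ k, Real.exp (v k)))
      ≤ ∑ l, (u l - v l) ^ 2 := by
  have hne : Nonempty (Fin d) := Fin.pos_iff_nonempty.mp hd
  set Zu := ∑ k, Real.exp (u k) with hZu
  set Zv := ∑ k, Real.exp (v k) with hZv
  have hZupos : 0 < Zu := Finset.sum_pos (fun k _ => Real.exp_pos _) Finset.univ_nonempty
  have hZvpos : 0 < Zv := Finset.sum_pos (fun k _ => Real.exp_pos _) Finset.univ_nonempty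
  set p : Fin d → ℝ := fun l => Real.exp (u l) / Zu with hp
  have hppos : ∀ l, 0 < p l := fun l => div_pos (Real.exp_pos _) hZupos
  have hpsum : ∑ l, p l = 1 := by
    rw [hp, ← Finset.sum_div, ← hZu, div_self hZupos.ne']
  set δ : Fin d → ℝ := fun l => u l - v l with hδ
  -- rewrite the log terms
  have hlog : ∀ l, Real.log ((Real.exp (u l) / Zu) / (Real.exp (v l) / Zv))
      = δ l + (Real.log Zv - Real.log Zu) := by
    intro l
    rw [Real.log_div (div_pos (Real.exp_pos _) hZupos).ne' (div_pos (Real.exp_pos _) hZvpos).ne',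
      Real.log_div (Real.exp_pos _).ne' hZupos.ne',
      Real.log_div (Real.exp_pos _).ne' hZvpos.ne',
      Real.log_exp, Real.log_exp]
    ring
  have hLHS : ∑ l, p l * Real.log ((Real.exp (u l) / Zu) / (Real.exp (v l) / Zv))
      = (∑ l, p l * δ l) + (Real.log Zv - Real.log Zu) := by
    calc ∑ l, p l * Real.log ((Real.exp (u l) / Zu) / (Real.exp (v l) / Zv))
        = ∑ l, (p l * δ l + p l * (Real.log Zv - Real.log Zu)) := by
          apply Finset.sum_congr rfl; intro l _; rw [hlog l]; ring
      _ = (∑ l, p l * δ l) + (∑ l, p l) * (Real.log Zv - Real.log Zu) := by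
          rw [Finset.sum_add_distrib, ← Finset.sum_mul]
      _ = (∑ l, p l * δ l) + (Real.log Zv - Real.log Zu) := by rw [hpsum, one_mul]
  set S := ∑ l, p l * Real.exp (-δ l) with hS
  have hSpos : 0 < S :=
    Finset.sum_pos (fun l _ => mul_pos (hppos l) (Real.exp_pos _)) Finset.univ_nonempty
  have hSval : Real.log Zv - Real.log Zu = Real.log S := by
    have hterm : ∀ l, p l * Real.exp (-δ l) = Real.exp (v l) / Zu := by
      intro l
      show Real.exp (u l) / Zu * Real.exp (-(u l - v l)) = Real.exp (v l) / Zu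
      rw [div_mul_eq_mul_div, ← Real.exp_add]
      congr 2
      ring
    have : S = Zv / Zu := by
      rw [hS, Finset.sum_congr rfl (fun l _ => hterm l), ← Finset.sum_div, ← hZv]
    rw [this, Real.log_div hZvpos.ne' hZupos.ne']
  rw [hLHS, hSval]
  -- it remains: ∑ p δ + log S ≤ ∑ δ^2
  by_cases hcase : ∀ l, -(13/8 : ℝ) ≤ δ l
  · -- small-deviation case
    have hSle : S ≤ 1 - (∑ l, p l * δ l) + ∑ l, p l * (δ l) ^ 2 := by
      have : S ≤ ∑ l, p l * (1 - δ l + (δ l) ^ 2) := by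
        apply Finset.sum_le_sum
        intro l _
        exact mul_le_mul_of_nonneg_left (exp_neg_le_quad (hcase l)) (hppos l).le
      calc S ≤ ∑ l, p l * (1 - δ l + (δ l) ^ 2) := this
        _ = (∑ l, p l) - (∑ l, p l * δ l) + ∑ l, p l * (δ l) ^ 2 := by
            rw [← Finset.sum_sub_distrib, ← Finset.sum_add_distrib]
            apply Finset.sum_congr rfl; intro l _; ring
        _ = 1 - (∑ l, p l * δ l) + ∑ l, p l * (δ l) ^ 2 := by rw [hpsum]
    have hlogS : Real.log S ≤ S - 1 := Real.log_le_sub_one_of_pos hSpos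
    have hfin : ∑ l, p l * (δ l) ^ 2 ≤ ∑ l, (δ l) ^ 2 := by
      apply Finset.sum_le_sum
      intro l _
      have hp1 : p l ≤ 1 := by
        rw [hp, div_le_one hZupos]
        exact Finset.single_le_sum (fun k _ => (Real.exp_pos (u k)).le) (Finset.mem_univ l)
      nlinarith [sq_nonneg (δ l), hp1, (hppos l).le]
    have : ∑ l, (δ l) ^ 2 = ∑ l, (u l - v l) ^ 2 := rfl
    linarith
  · -- some coordinate is very negative
    push_neg at hcase
    obtain ⟨j, hj⟩ := hcase
    set a := Finset.univ.inf' Finset.univ_nonempty δ with ha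
    set b := Finset.univ.sup' Finset.univ_nonempty δ with hb
    have haj : a ≤ δ j := Finset.inf'_le δ (Finset.mem_univ j)
    have hab : a < -(13/8 : ℝ) := lt_of_le_of_lt haj hj
    have hsum1 : ∑ l, p l * δ l ≤ b := by
      calc ∑ l, p l * δ l ≤ ∑ l, p l * b := by
            apply Finset.sum_le_sum
            intro l _
            exact mul_le_mul_of_nonneg_left (Finset.le_sup' δ (Finset.mem_univ l)) (hppos l).le
        _ = b := by rw [← Finset.sum_mul, hpsum, one_mul]
    have hsum2 : Real.log S ≤ -a := by
      have hSle : S ≤ Real.exp (-a) := by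
        calc S ≤ ∑ l, p l * Real.exp (-a) := by
              apply Finset.sum_le_sum
              intro l _
              exact mul_le_mul_of_nonneg_left
                (Real.exp_le_exp.mpr (neg_le_neg (Finset.inf'_le δ (Finset.mem_univ l))))
                (hppos l).le
          _ = Real.exp (-a) := by rw [← Finset.sum_mul, hpsum, one_mul]
      calc Real.log S ≤ Real.log (Real.exp (-a)) := Real.log_le_log hSpos hSle
        _ = -a := Real.log_exp _
    obtain ⟨j₀, -, hj₀⟩ := Finset.exists_mem_eq_inf' Finset.univ_nonempty δ
    obtain ⟨j₁, -, hj₁⟩ := Finset.exists_mem_eq_sup' Finset.univ_nonempty δ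
    have hgoal : b - a ≤ ∑ l, (δ l) ^ 2 := by
      rcases le_or_gt b 1 with hb1 | hb1
      · have h1 : b - a ≤ a ^ 2 := by nlinarith
        have h2 : a ^ 2 ≤ ∑ l, (δ l) ^ 2 := by
          rw [ha, hj₀]
          exact Finset.single_le_sum (fun l _ => sq_nonneg (δ l)) (Finset.mem_univ j₀)
        linarith
      · have hne' : j₀ ≠ j₁ := by
          intro h
          have hA : a = δ j₀ := ha.trans hj₀
          have hB : b = δ j₁ := hb.trans hj₁
          rw [h] at hA
          have : a = b := by rw [hA, hB]
          linarith
        have h2 : a ^ 2 + b ^ 2 ≤ ∑ l, (δ l) ^ 2 := by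
          rw [ha, hj₀, hb, hj₁]
          calc (δ j₀) ^ 2 + (δ j₁) ^ 2 = ∑ l ∈ ({j₀, j₁} : Finset (Fin d)), (δ l) ^ 2 := by
                rw [Finset.sum_pair hne']
            _ ≤ ∑ l, (δ l) ^ 2 := by
                apply Finset.sum_le_sum_of_subset_of_nonneg (Finset.subset_univ _)
                intro l _ _
                exact sq_nonneg _
        have h1 : b - a ≤ a ^ 2 + b ^ 2 := by nlinarith
        linarith
    calc (∑ l, p l * δ l) + Real.log S ≤ b + -a := add_le_add hsum1 hsum2
      _ = b - a := by ring
      _ ≤ ∑ l, (δ l) ^ 2 := hgoal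
end

section
/- Logistic KL inequality: for all real numbers x and y, ln((1 + e^{−y})/(1 + e^{−x})) / (1 + e^{−x}) + ln((1 + e^{y})/(1 + e^{x})) / (1 + e^{x}) ≤ (x − y)². Equivalently, the Kullback–Leibler divergence between the Bernoulli distribution with success probability 1/(1+e^{−x}) and the Bernoulli distribution with success probability 1/(1+e^{−y}) is at most (x − y)². (Paper: the pointwise fact used in step (b) of the logistic regression Bayesian error bound.) -/
open Real

lemma logistic_kl_key (x y : ℝ) (h : y ≤ x) :
    Real.log ((1 + Real.exp (-y)) / (1 + Real.exp (-x))) / (1 + Real.exp (-x))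
        + Real.log ((1 + Real.exp y) / (1 + Real.exp x)) / (1 + Real.exp x)
      ≤ (x - y) ^ 2 := by
  set a := Real.exp x with ha_def
  set b := Real.exp y with hb_def
  have ha : 0 < a := Real.exp_pos x
  have hb : 0 < b := Real.exp_pos y
  have h1a : 0 < 1 + a := by linarith
  have h1b : 0 < 1 + b := by linarith
  set d := x - y with hd_def
  have hd : 0 ≤ d := by simp [hd_def]; linarith
  set E := Real.exp (y - x) with hE_def
  have hE : 0 < E := Real.exp_pos _
  have hbaE : b = a * E := by
    rw [ha_def, hb_def, hE_def, ← Real.exp_add]; ring_nf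
  -- E - 1 + d ≤ d^2 and 0 ≤ E - 1 + d
  have hEd : E = Real.exp (-d) := by rw [hE_def, hd_def]; ring_nf
  have hE0 : 0 ≤ E - 1 + d := by
    have := Real.add_one_le_exp (-d)
    rw [← hEd] at this; linarith
  have hE1 : E - 1 + d ≤ d ^ 2 := by
    have h1 : (1 : ℝ) + d ≤ Real.exp d := by linarith [Real.add_one_le_exp d]
    have hpos : (0 : ℝ) < 1 + d := by linarith
    have h2 : E ≤ (1 + d)⁻¹ := by
      rw [hEd, Real.exp_neg]
      exact inv_anti₀ (by positivity) h1
    have hu : (1 + d)⁻¹ * (1 + d) = 1 := inv_mul_cancel₀ hpos.ne'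
    nlinarith [hu, hd, sq_nonneg d, inv_pos.mpr hpos]
  -- rewrite the logs
  have e1 : (1 : ℝ) + Real.exp (-x) = (1 + a) / a := by
    rw [Real.exp_neg]; field_simp; rw [ha_def]; ring
  have e2 : (1 : ℝ) + Real.exp (-y) = (1 + b) / b := by
    rw [Real.exp_neg]; field_simp; rw [hb_def]; ring
  set L := Real.log (1 + b) - Real.log (1 + a) with hL_def
  have log2 : Real.log ((1 + b) / (1 + a)) = L := by
    rw [Real.log_div h1b.ne' h1a.ne', hL_def]
  have log1 : Real.log ((1 + Real.exp (-y)) / (1 + Real.exp (-x))) = L + d := by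
    rw [e1, e2, Real.log_div (by positivity) (by positivity),
      Real.log_div h1b.ne' hb.ne', Real.log_div h1a.ne' ha.ne',
      hb_def, ha_def, Real.log_exp, Real.log_exp, hL_def, hd_def]
    ring
  -- convexity-type bound on L
  have hL : L * (1 + a) ≤ b - a := by
    have hlog : Real.log ((1 + b) / (1 + a)) ≤ (1 + b) / (1 + a) - 1 :=
      Real.log_le_sub_one_of_pos (by positivity)
    rw [log2] at hlog
    have : (1 + b) / (1 + a) - 1 = (b - a) / (1 + a) := by field_simp; ring
    rw [this, le_div_iff₀ h1a] at hlog
    linarith [hlog]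
  rw [log1, log2, e1]
  have hsimp : (L + d) / ((1 + a) / a) + L / (1 + a)
      = (L * (1 + a) + d * a) / (1 + a) := by
    field_simp
    ring
  rw [hsimp, div_le_iff₀ h1a]
  have key1 : a * (E - 1 + d) ≤ a * d ^ 2 :=
    mul_le_mul_of_nonneg_left hE1 ha.le
  nlinarith [hL, key1, sq_nonneg d, hbaE]

/-- **Logistic KL inequality** (paper: the pointwise fact used in step (b) of the logistic
regression Bayesian error bound).  For all real `x`, `y`,
`ln((1+e^{−y})/(1+e^{−x}))/(1+e^{−x}) + ln((1+e^{y})/(1+e^{x}))/(1+e^{x}) ≤ (x−y)²`;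
equivalently, the KL divergence between Bernoulli(`1/(1+e^{−x})`) and
Bernoulli(`1/(1+e^{−y})`) is at most `(x − y)²`. -/
theorem logistic_kl_le_sq (x y : ℝ) :
    Real.log ((1 + Real.exp (-y)) / (1 + Real.exp (-x))) / (1 + Real.exp (-x))
        + Real.log ((1 + Real.exp y) / (1 + Real.exp x)) / (1 + Real.exp x)
      ≤ (x - y) ^ 2 := by
  rcases le_total y x with h | h
  · exact logistic_kl_key x y h
  · have := logistic_kl_key (-x) (-y) (by linarith)
    rw [neg_neg, neg_neg] at this
    have hsq : (-x - -y) ^ 2 = (x - y) ^ 2 := by ring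
    rw [hsq] at this
    linarith [this]
end

section
/- Misspecified prior error bound: let Ψ and 𝒳 be nonempty finite types and n ≥ 1. Let π and π̃ be probability measures on Ψ with π(ψ) > 0 ⟹ π̃(ψ) > 0, and let κ : Ψ → (probability measures on 𝒳^n) be a likelihood kernel. Let μ and ν be the probability measures on Ψ × 𝒳^n with μ({(ψ,x)}) = π({ψ})·κ(ψ)({x}) and ν({(ψ,x)}) = π̃({ψ})·κ(ψ)({x}), and let X = (X_1,…,X_n) denote the 𝒳^n-coordinate. Then Σ_{t=0}^{n−1} E_μ[ d_KL( μ-conditional law of X_{t+1} given (X_1,…,X_t) ‖ ν-conditional law of X_{t+1} given (X_1,…,X_t) ) ] = d_KL( μ-law of X ‖ ν-law of X ) ≤ d_KL(π ‖ π̃). (Paper: Theorem 'misspecified prior error bound', via the chain rule and the data processing inequality for KL divergence.) -/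
open MeasureTheory

/-- Kullback–Leibler divergence (natural log) between two pmfs on a finite type,
given as real-valued functions. -/
noncomputable def klFin {α : Type*} [Fintype α] (p q : α → ℝ) : ℝ :=
  ∑ x, p x * Real.log (p x / q x)

/-- The conditional law, under a joint measure `μ` on `Ψ × 𝒳^n`, of the `(t+1)`-st
coordinate of the `𝒳^n`-component given that its first `t` coordinates equal `h`. -/
noncomputable def condLaw {Ψ 𝒳 : Type*} [MeasurableSpace Ψ] [MeasurableSpace 𝒳] {n : ℕ}
    (μ : Measure (Ψ × (Fin n → 𝒳))) (t : Fin n) (h : Fin t.val → 𝒳) (x : 𝒳) : ℝ :=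
  (μ {p | (∀ i : Fin t.val, p.2 (Fin.castLE t.isLt.le i) = h i) ∧ p.2 t = x}).toReal /
    (μ {p | ∀ i : Fin t.val, p.2 (Fin.castLE t.isLt.le i) = h i}).toReal

open scoped Classical

lemma tele (f : ℕ → ℝ) (n : ℕ) : ∑ i ∈ Finset.range n, (f (i + 1) - f i) = f n - f 0 := by
  induction n with
  | zero => simp
  | succ n ih => rw [Finset.sum_range_succ, ih]; ring

lemma meas_toReal_sum {α : Type*} [Fintype α] [MeasurableSpace α] [MeasurableSingletonClass α]
    (μ : Measure α) [IsFiniteMeasure μ] (S : Set α) :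
    (μ S).toReal = ∑ x, if x ∈ S then (μ {x}).toReal else 0 := by
  have h2 : μ (⋃ x ∈ (Finset.univ.filter (· ∈ S)), ({x} : Set α))
      = ∑ x ∈ Finset.univ.filter (· ∈ S), μ {x} :=
    measure_biUnion_finset
      (fun a _ b _ hab => by simp [Set.disjoint_singleton, hab])
      (fun b _ => measurableSet_singleton b)
  have h1 : (⋃ x ∈ (Finset.univ.filter (· ∈ S)), ({x} : Set α)) = S := by
    ext y; simp
  rw [h1] at h2
  rw [h2, ENNReal.toReal_sum (fun a _ => measure_ne_top μ _), ← Finset.sum_filter]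

lemma sum_ite_snd {A B : Type*} [Fintype A] [Fintype B] (m : A × B → ℝ) (Q : B → Prop) :
    ∑ p : A × B, (if Q p.2 then m p else 0)
      = ∑ g : B, (if Q g then ∑ s : A, m (s, g) else 0) := by
  rw [Fintype.sum_prod_type, Finset.sum_comm]
  refine Finset.sum_congr rfl fun g _ => ?_
  by_cases h : Q g <;> simp [h]

lemma sum_ite_eq_cl {α β : Type*} [Fintype α] [AddCommMonoid β] (g : α) (f : α → β)
    (c : α → Prop) {D : DecidablePred c} (hc : ∀ x, c x ↔ x = g) :
    ∑ x, (@ite β (c x) (D x) (f x) 0) = f g :=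
  (Finset.sum_eq_single g (fun b _ hb => if_neg (fun h => hb ((hc b).1 h)))
    (fun h => absurd (Finset.mem_univ g) h)).trans (if_pos ((hc g).2 rfl))

lemma meas_snd_toReal {Ψ 𝒳 : Type*} [Fintype Ψ] [Fintype 𝒳]
    [MeasurableSpace Ψ] [MeasurableSingletonClass Ψ]
    [MeasurableSpace 𝒳] [MeasurableSingletonClass 𝒳] {n : ℕ}
    (μ : Measure (Ψ × (Fin n → 𝒳))) [IsFiniteMeasure μ] (Q : (Fin n → 𝒳) → Prop) :
    (μ {p | Q p.2}).toReal
      = ∑ g, if Q g then (μ {p | p.2 = g}).toReal else 0 := by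
  rw [meas_toReal_sum]
  have h2 : ∀ g : Fin n → 𝒳, (μ {p | p.2 = g}).toReal = ∑ s, (μ {(s, g)}).toReal := by
    intro g
    rw [meas_toReal_sum]
    have := sum_ite_snd (fun p : Ψ × (Fin n → 𝒳) => (μ {p}).toReal) (· = g)
    simp only [Set.mem_setOf_eq]
    refine Eq.trans (Finset.sum_congr rfl fun x _ => ?_) (this.trans ?_)
    · by_cases hx : x.2 = g <;> simp [hx]
    · exact sum_ite_eq_cl g _ _ (fun x => Iff.rfl)
  simp_rw [h2]
  have := sum_ite_snd (fun p : Ψ × (Fin n → 𝒳) => (μ {p}).toReal) Q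
  simpa only [Set.mem_setOf_eq] using this

lemma one_sub_inv_le_log {y : ℝ} (hy : 0 < y) : 1 - y⁻¹ ≤ Real.log y := by
  have h := Real.log_le_sub_one_of_pos (inv_pos.2 hy)
  rw [Real.log_inv] at h
  linarith

lemma sum_eq_zero_of_nonneg {ι : Type*} {s : Finset ι} {a : ι → ℝ}
    (ha : ∀ i ∈ s, 0 ≤ a i) (h : ∑ i ∈ s, a i = 0) : ∀ i ∈ s, a i = 0 :=
  (Finset.sum_eq_zero_iff_of_nonneg ha).1 h

lemma log_sum_ineq {ι : Type*} (s : Finset ι) (a b : ι → ℝ)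
    (ha : ∀ i ∈ s, 0 ≤ a i) (hb : ∀ i ∈ s, 0 ≤ b i)
    (hab : ∀ i ∈ s, b i = 0 → a i = 0) :
    (∑ i ∈ s, a i) * Real.log ((∑ i ∈ s, a i) / (∑ i ∈ s, b i))
      ≤ ∑ i ∈ s, a i * Real.log (a i / b i) := by
  classical
  set A := ∑ i ∈ s, a i with hA
  set B := ∑ i ∈ s, b i with hB
  rcases eq_or_lt_of_le (Finset.sum_nonneg ha) with h0 | hApos
  · -- A = 0
    have hz := sum_eq_zero_of_nonneg ha h0.symm
    have hA0 : A = 0 := h0.symm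
    rw [hA0, zero_mul]
    refine le_of_eq (Finset.sum_eq_zero fun i hi => ?_).symm
    rw [hz i hi, zero_mul]
  · have hBpos : 0 < B := by
      rcases eq_or_lt_of_le (Finset.sum_nonneg hb) with h0 | h
      · exfalso
        have hz := sum_eq_zero_of_nonneg hb h0.symm
        have : A = 0 := Finset.sum_eq_zero fun i hi => hab i hi (hz i hi)
        exact absurd this (ne_of_gt hApos)
      · exact h
    set t := s.filter (fun i => 0 < a i) with ht
    have hts : t ⊆ s := Finset.filter_subset _ _
    have hbpos : ∀ i ∈ t, 0 < b i := by
      intro i hi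
      rcases (Finset.mem_filter.1 hi) with ⟨his, hai⟩
      rcases eq_or_lt_of_le (hb i his) with h0 | h
      · exact absurd (hab i his h0.symm) (ne_of_gt hai)
      · exact h
    have hAt : A = ∑ i ∈ t, a i := by
      rw [hA, ht, Finset.sum_filter_of_ne]
      intro i hi hne
      rcases eq_or_lt_of_le (ha i hi) with h0 | h
      · exact absurd h0.symm hne
      · exact h
    have hRt : ∑ i ∈ s, a i * Real.log (a i / b i)
        = ∑ i ∈ t, a i * Real.log (a i / b i) := by
      rw [ht, Finset.sum_filter_of_ne]
      intro i hi hne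
      rcases eq_or_lt_of_le (ha i hi) with h0 | h
      · exact absurd (by rw [← h0, zero_mul]) hne
      · exact h
    have hBt : ∑ i ∈ t, b i ≤ B := Finset.sum_le_sum_of_subset_of_nonneg hts
      (fun i hi _ => hb i hi)
    rw [hRt]
    have key : ∀ i ∈ t,
        a i * Real.log (A / B) + (a i - (A / B) * b i) ≤ a i * Real.log (a i / b i) := by
      intro i hi
      have hai : 0 < a i := (Finset.mem_filter.1 hi).2
      have hbi : 0 < b i := hbpos i hi
      have hy : 0 < (a i * B) / (b i * A) := by positivity
      have hlog := one_sub_inv_le_log hy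
      have hlogeq : Real.log ((a i * B) / (b i * A))
          = Real.log (a i / b i) - Real.log (A / B) := by
        rw [Real.log_div (by positivity) (by positivity),
          Real.log_div (ne_of_gt hai) (ne_of_gt hbi),
          Real.log_div (ne_of_gt hApos) (ne_of_gt hBpos),
          Real.log_mul (ne_of_gt hai) (ne_of_gt hBpos),
          Real.log_mul (ne_of_gt hbi) (ne_of_gt hApos)]
        ring
      have hinv : ((a i * B) / (b i * A))⁻¹ = (b i * A) / (a i * B) := by
        rw [inv_div]
      rw [hlogeq, hinv] at hlog
      have h2 : a i * (1 - (b i * A) / (a i * B))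
          ≤ a i * (Real.log (a i / b i) - Real.log (A / B)) :=
        mul_le_mul_of_nonneg_left hlog (le_of_lt hai)
      have h3 : a i * (1 - (b i * A) / (a i * B)) = a i - (A / B) * b i := by
        field_simp
      rw [h3] at h2
      linarith [h2]
    have hsum := Finset.sum_le_sum key
    rw [Finset.sum_add_distrib, Finset.sum_sub_distrib, ← Finset.mul_sum, ← hAt,
      ← Finset.sum_mul] at hsum
    have h4 : A - A / B * ∑ i ∈ t, b i ≥ A - A / B * B := by
      have : A / B * ∑ i ∈ t, b i ≤ A / B * B :=
        mul_le_mul_of_nonneg_left hBt (by positivity)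
      linarith
    have h5 : A - A / B * B = 0 := by field_simp; ring
    calc A * Real.log (A / B) ≤ (∑ i ∈ t, a i) * Real.log (A / B) + (A - A / B * ∑ i ∈ t, b i) := by
          rw [← hAt]; linarith [h4, h5.symm.le]
      _ ≤ ∑ i ∈ t, a i * Real.log (a i / b i) := hsum

lemma dpiFin {Ψ 𝒢 : Type*} [Fintype Ψ] [Fintype 𝒢] (r r' : Ψ → ℝ) (k : Ψ → 𝒢 → ℝ)
    (hr : ∀ s, 0 ≤ r s) (hr' : ∀ s, 0 ≤ r' s) (hk : ∀ s g, 0 ≤ k s g)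
    (hks : ∀ s, ∑ g, k s g = 1) (hac : ∀ s, r' s = 0 → r s = 0) :
    klFin (fun g => ∑ s, r s * k s g) (fun g => ∑ s, r' s * k s g) ≤ klFin r r' := by
  unfold klFin
  have step1 : ∀ g : 𝒢,
      (∑ s, r s * k s g) * Real.log ((∑ s, r s * k s g) / (∑ s, r' s * k s g))
        ≤ ∑ s, (r s * k s g) * Real.log ((r s * k s g) / (r' s * k s g)) := by
    intro g
    refine log_sum_ineq Finset.univ (fun s => r s * k s g) (fun s => r' s * k s g)
      (fun s _ => mul_nonneg (hr s) (hk s g))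
      (fun s _ => mul_nonneg (hr' s) (hk s g)) ?_
    intro s _ h
    show r s * k s g = 0
    rcases mul_eq_zero.1 h with h' | h'
    · rw [hac s h', zero_mul]
    · rw [h', mul_zero]
  calc ∑ g, (∑ s, r s * k s g) * Real.log ((∑ s, r s * k s g) / (∑ s, r' s * k s g))
      ≤ ∑ g, ∑ s, (r s * k s g) * Real.log ((r s * k s g) / (r' s * k s g)) :=
        Finset.sum_le_sum (fun g _ => step1 g)
    _ = ∑ s, ∑ g : 𝒢, (r s * k s g) * Real.log ((r s * k s g) / (r' s * k s g)) :=
        Finset.sum_comm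
    _ = ∑ s, r s * Real.log (r s / r' s) := by
        refine Finset.sum_congr rfl fun s _ => ?_
        have hterm : ∀ g : 𝒢, (r s * k s g) * Real.log ((r s * k s g) / (r' s * k s g))
            = k s g * (r s * Real.log (r s / r' s)) := by
          intro g
          rcases eq_or_lt_of_le (hk s g) with h0 | hpos
          · rw [← h0]; ring
          · rw [mul_comm (r s) (k s g), mul_comm (r' s) (k s g),
              mul_div_mul_left _ _ (ne_of_gt hpos)]
            ring
        rw [Finset.sum_congr rfl (fun g _ => hterm g), ← Finset.sum_mul, hks s, one_mul]


lemma sum_ite_nonneg {α : Type*} [Fintype α] (c : α → Prop) [DecidablePred c] (p : α → ℝ)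
    (hp : ∀ g, 0 ≤ p g) : 0 ≤ ∑ g, if c g then p g else 0 :=
  Finset.sum_nonneg fun g _ => by by_cases h : c g <;> simp [h, hp g]

lemma sum_ite_zero_of {α : Type*} [Fintype α] (c : α → Prop) [DecidablePred c] (p q : α → ℝ)
    (hq : ∀ g, 0 ≤ q g) (hac : ∀ g, q g = 0 → p g = 0)
    (h : ∑ g, (if c g then q g else 0) = 0) : ∑ g, (if c g then p g else 0) = 0 := by
  refine Finset.sum_eq_zero fun g _ => ?_
  have hz := sum_eq_zero_of_nonneg
    (fun i _ => by by_cases hi : c i <;> simp [hi, hq i]) h g (Finset.mem_univ g)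
  by_cases hc : c g
  · rw [if_pos hc] at hz ⊢; exact hac g hz
  · rw [if_neg hc]

noncomputable def prefP {𝒳 : Type*} [Fintype 𝒳] {n : ℕ} (p : (Fin n → 𝒳) → ℝ)
    (t : ℕ) (ht : t ≤ n) (h : Fin t → 𝒳) : ℝ :=
  ∑ g, if (∀ i : Fin t, g (Fin.castLE ht i) = h i) then p g else 0

lemma prefP_nonneg {𝒳 : Type*} [Fintype 𝒳] {n : ℕ} (p : (Fin n → 𝒳) → ℝ)
    (hp : ∀ g, 0 ≤ p g) (t : ℕ) (ht : t ≤ n) (h : Fin t → 𝒳) :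
    0 ≤ prefP p t ht h := by unfold prefP; exact sum_ite_nonneg _ p hp

lemma pair_cond_iff {𝒳 : Type*} {n : ℕ} (t : Fin n) (h : Fin t.val → 𝒳) (x : 𝒳)
    (g : Fin n → 𝒳) :
    ((∀ i : Fin t.val, g (Fin.castLE t.isLt.le i) = h i) ∧ g t = x)
      ↔ ∀ i : Fin (t.val + 1), g (Fin.castLE (Nat.succ_le_of_lt t.isLt) i)
          = (Fin.snoc h x : Fin (t.val + 1) → 𝒳) i := by
  constructor
  · rintro ⟨h1, h2⟩ i
    refine Fin.lastCases ?_ ?_ i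
    · have he : Fin.castLE (Nat.succ_le_of_lt t.isLt) (Fin.last t.val) = t := by
        ext; simp
      rw [he, Fin.snoc_last]; exact h2
    · intro j
      have he : Fin.castLE (Nat.succ_le_of_lt t.isLt) (Fin.castSucc j)
          = Fin.castLE t.isLt.le j := by ext; simp
      rw [he, Fin.snoc_castSucc]; exact h1 j
  · intro hall
    constructor
    · intro j
      have := hall (Fin.castSucc j)
      have he : Fin.castLE (Nat.succ_le_of_lt t.isLt) (Fin.castSucc j)
          = Fin.castLE t.isLt.le j := by ext; simp
      rwa [he, Fin.snoc_castSucc] at this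
    · have := hall (Fin.last t.val)
      have he : Fin.castLE (Nat.succ_le_of_lt t.isLt) (Fin.last t.val) = t := by
        ext; simp
      rwa [he, Fin.snoc_last] at this

lemma pp_snoc {𝒳 : Type*} [Fintype 𝒳] {n : ℕ} (p : (Fin n → 𝒳) → ℝ)
    (t : Fin n) (h : Fin t.val → 𝒳) (x : 𝒳) :
    (∑ g, if (∀ i : Fin t.val, g (Fin.castLE t.isLt.le i) = h i) ∧ g t = x
        then p g else 0)
      = prefP p (t.val + 1) (Nat.succ_le_of_lt t.isLt) (Fin.snoc h x) := by
  refine Finset.sum_congr rfl fun g _ => ?_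
  exact if_congr (pair_cond_iff t h x g) rfl rfl

lemma sum_pp_eq_prefP {𝒳 : Type*} [Fintype 𝒳] {n : ℕ} (p : (Fin n → 𝒳) → ℝ)
    (t : Fin n) (h : Fin t.val → 𝒳) :
    (∑ x : 𝒳, ∑ g, if (∀ i : Fin t.val, g (Fin.castLE t.isLt.le i) = h i) ∧ g t = x
        then p g else 0)
      = prefP p t.val t.isLt.le h := by
  rw [Finset.sum_comm]
  refine Finset.sum_congr rfl fun g _ => ?_
  by_cases hc : ∀ i : Fin t.val, g (Fin.castLE t.isLt.le i) = h i
  · have he : ∀ x : 𝒳,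
        (if (∀ i : Fin t.val, g (Fin.castLE t.isLt.le i) = h i) ∧ g t = x
          then p g else 0) = if g t = x then p g else 0 :=
      fun x => if_congr (and_iff_right hc) rfl rfl
    rw [Finset.sum_congr rfl fun x _ => he x, if_pos hc]
    exact sum_ite_eq_cl (g t) (fun _ => p g) _ (fun x => eq_comm)
  · rw [if_neg hc]
    exact Finset.sum_eq_zero fun x _ => if_neg (fun hab => hc hab.1)

lemma perH' {𝒳 : Type*} [Fintype 𝒳] (pp qq : 𝒳 → ℝ) (PP QQ : ℝ)
    (hpp : ∀ x, 0 ≤ pp x) (hqq : ∀ x, 0 ≤ qq x)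
    (hPP0 : 0 ≤ PP) (hQQ0 : 0 ≤ QQ)
    (hsp : ∑ x, pp x = PP)
    (hacx : ∀ x, qq x = 0 → pp x = 0)
    (hacP : QQ = 0 → PP = 0) :
    PP * klFin (fun x => pp x / PP) (fun x => qq x / QQ)
      = (∑ x, pp x * Real.log (pp x / qq x)) - PP * Real.log (PP / QQ) := by
  by_cases hPP : PP = 0
  · have hppz : ∀ x, pp x = 0 := fun x =>
      sum_eq_zero_of_nonneg (fun i _ => hpp i) (hsp.trans hPP) x (Finset.mem_univ x)
    rw [hPP, zero_mul, zero_mul, sub_zero]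
    exact (Finset.sum_eq_zero fun x _ => by rw [hppz x, zero_mul]).symm
  · have hPPpos : 0 < PP := hPP0.lt_of_ne' hPP
    have hQQ : QQ ≠ 0 := fun h0 => hPP (hacP h0)
    have hQQpos : 0 < QQ := hQQ0.lt_of_ne' hQQ
    unfold klFin
    rw [Finset.mul_sum]
    have key : ∀ x, PP * ((pp x / PP) * Real.log ((pp x / PP) / (qq x / QQ)))
        = pp x * Real.log (pp x / qq x) - pp x * Real.log (PP / QQ) := by
      intro x
      by_cases hx : pp x = 0
      · rw [hx]; field_simp; ring
      · have hxpos : 0 < pp x := (hpp x).lt_of_ne' hx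
        have hqx : qq x ≠ 0 := fun h0 => hx (hacx x h0)
        have hqxpos : 0 < qq x := (hqq x).lt_of_ne' hqx
        have h1 : PP * ((pp x / PP) * Real.log ((pp x / PP) / (qq x / QQ)))
            = pp x * Real.log ((pp x / PP) / (qq x / QQ)) := by
          field_simp
        have h2 : Real.log ((pp x / PP) / (qq x / QQ))
            = Real.log (pp x / qq x) - Real.log (PP / QQ) := by
          rw [Real.log_div (ne_of_gt (div_pos hxpos hPPpos))
              (ne_of_gt (div_pos hqxpos hQQpos)),
            Real.log_div (ne_of_gt hxpos) (ne_of_gt hPPpos),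
            Real.log_div (ne_of_gt hqxpos) (ne_of_gt hQQpos),
            Real.log_div (ne_of_gt hxpos) (ne_of_gt hqxpos),
            Real.log_div (ne_of_gt hPPpos) (ne_of_gt hQQpos)]
          ring
        rw [h1, h2]
        ring
    rw [Finset.sum_congr rfl fun x _ => key x, Finset.sum_sub_distrib,
      ← Finset.sum_mul, hsp]

lemma sum_snoc {𝒳 β : Type*} [Fintype 𝒳] [AddCommMonoid β] {m : ℕ}
    (G : (Fin (m + 1) → 𝒳) → β) :
    ∑ h : Fin m → 𝒳, ∑ x : 𝒳, G (Fin.snoc h x) = ∑ h' : Fin (m + 1) → 𝒳, G h' := by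
  rw [Finset.sum_comm]
  rw [← Equiv.sum_comp (Fin.snocEquiv (fun _ => 𝒳)) G]
  rw [Fintype.sum_prod_type]
  exact Finset.sum_congr rfl fun x _ => Finset.sum_congr rfl fun h _ => rfl

theorem chainRuleFin {𝒳 : Type*} [Fintype 𝒳] {n : ℕ} (p q : (Fin n → 𝒳) → ℝ)
    (hp : ∀ g, 0 ≤ p g) (hq : ∀ g, 0 ≤ q g) (hac : ∀ g, q g = 0 → p g = 0)
    (hps : ∑ g, p g = 1) (hqs : ∑ g, q g = 1) :
    (∑ t : Fin n, ∑ h : Fin t.val → 𝒳,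
      prefP p t.val t.isLt.le h *
        klFin
          (fun x => (∑ g, if (∀ i : Fin t.val, g (Fin.castLE t.isLt.le i) = h i) ∧ g t = x
              then p g else 0) / prefP p t.val t.isLt.le h)
          (fun x => (∑ g, if (∀ i : Fin t.val, g (Fin.castLE t.isLt.le i) = h i) ∧ g t = x
              then q g else 0) / prefP q t.val t.isLt.le h))
      = klFin p q := by
  classical
  set F : ℕ → ℝ := fun m =>
    if hm : m ≤ n then
      ∑ h : Fin m → 𝒳, prefP p m hm h * Real.log (prefP p m hm h / prefP q m hm h)
    else 0 with hF
  have hstep : ∀ t : Fin n,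
      (∑ h : Fin t.val → 𝒳,
        prefP p t.val t.isLt.le h *
          klFin
            (fun x => (∑ g, if (∀ i : Fin t.val, g (Fin.castLE t.isLt.le i) = h i) ∧ g t = x
                then p g else 0) / prefP p t.val t.isLt.le h)
            (fun x => (∑ g, if (∀ i : Fin t.val, g (Fin.castLE t.isLt.le i) = h i) ∧ g t = x
                then q g else 0) / prefP q t.val t.isLt.le h))
        = F (t.val + 1) - F t.val := by
    intro t
    have ht1 : t.val + 1 ≤ n := Nat.succ_le_of_lt t.isLt
    have hperH : ∀ h : Fin t.val → 𝒳,
        prefP p t.val t.isLt.le h *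
          klFin
            (fun x => (∑ g, if (∀ i : Fin t.val, g (Fin.castLE t.isLt.le i) = h i) ∧ g t = x
                then p g else 0) / prefP p t.val t.isLt.le h)
            (fun x => (∑ g, if (∀ i : Fin t.val, g (Fin.castLE t.isLt.le i) = h i) ∧ g t = x
                then q g else 0) / prefP q t.val t.isLt.le h)
        = (∑ x : 𝒳,
            (∑ g, if (∀ i : Fin t.val, g (Fin.castLE t.isLt.le i) = h i) ∧ g t = x
                then p g else 0) *
              Real.log
                ((∑ g, if (∀ i : Fin t.val, g (Fin.castLE t.isLt.le i) = h i) ∧ g t = x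
                    then p g else 0) /
                  (∑ g, if (∀ i : Fin t.val, g (Fin.castLE t.isLt.le i) = h i) ∧ g t = x
                    then q g else 0)))
          - prefP p t.val t.isLt.le h *
              Real.log (prefP p t.val t.isLt.le h / prefP q t.val t.isLt.le h) := by
      intro h
      refine perH' _ _ _ _
        (fun x => sum_ite_nonneg _ p hp) (fun x => sum_ite_nonneg _ q hq)
        (prefP_nonneg p hp t.val t.isLt.le h) (prefP_nonneg q hq t.val t.isLt.le h)
        (sum_pp_eq_prefP p t h) (fun x => sum_ite_zero_of _ p q hq hac)
        (fun hz => sum_ite_zero_of _ p q hq hac hz)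
    rw [Finset.sum_congr rfl fun h _ => hperH h, Finset.sum_sub_distrib]
    have hA1 : (∑ h : Fin t.val → 𝒳, ∑ x : 𝒳,
        (∑ g, if (∀ i : Fin t.val, g (Fin.castLE t.isLt.le i) = h i) ∧ g t = x
            then p g else 0) *
          Real.log
            ((∑ g, if (∀ i : Fin t.val, g (Fin.castLE t.isLt.le i) = h i) ∧ g t = x
                then p g else 0) /
              (∑ g, if (∀ i : Fin t.val, g (Fin.castLE t.isLt.le i) = h i) ∧ g t = x
                then q g else 0)))
        = F (t.val + 1) := by
      have hre : ∀ (h : Fin t.val → 𝒳) (x : 𝒳),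
          (∑ g, if (∀ i : Fin t.val, g (Fin.castLE t.isLt.le i) = h i) ∧ g t = x
              then p g else 0) *
            Real.log
              ((∑ g, if (∀ i : Fin t.val, g (Fin.castLE t.isLt.le i) = h i) ∧ g t = x
                  then p g else 0) /
                (∑ g, if (∀ i : Fin t.val, g (Fin.castLE t.isLt.le i) = h i) ∧ g t = x
                  then q g else 0))
          = prefP p (t.val + 1) ht1 (Fin.snoc h x) *
              Real.log (prefP p (t.val + 1) ht1 (Fin.snoc h x) /
                prefP q (t.val + 1) ht1 (Fin.snoc h x)) := by
        intro h x
        rw [pp_snoc p t h x, pp_snoc q t h x]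
      rw [Finset.sum_congr rfl fun h _ => Finset.sum_congr rfl fun x _ => hre h x]
      rw [sum_snoc (fun h' => prefP p (t.val + 1) ht1 h' *
        Real.log (prefP p (t.val + 1) ht1 h' / prefP q (t.val + 1) ht1 h'))]
      exact (dif_pos ht1
        (t := fun hm => ∑ h' : Fin (t.val + 1) → 𝒳, prefP p (t.val + 1) hm h' *
          Real.log (prefP p (t.val + 1) hm h' / prefP q (t.val + 1) hm h'))
        (e := fun _ => (0 : ℝ))).symm
    have hA0 : (∑ h : Fin t.val → 𝒳,
        prefP p t.val t.isLt.le h *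
          Real.log (prefP p t.val t.isLt.le h / prefP q t.val t.isLt.le h))
        = F t.val := (dif_pos t.isLt.le
      (t := fun hm => ∑ h : Fin t.val → 𝒳, prefP p t.val hm h *
        Real.log (prefP p t.val hm h / prefP q t.val hm h))
      (e := fun _ => (0 : ℝ))).symm
    rw [hA1, hA0]
  rw [Finset.sum_congr rfl fun t _ => hstep t]
  rw [Fin.sum_univ_eq_sum_range (fun m => F (m + 1) - F m) n, tele F n]
  have hFn : F n = klFin p q := by
    have hFn' : F n = ∑ h : Fin n → 𝒳,
        prefP p n (le_refl n) h *
          Real.log (prefP p n (le_refl n) h / prefP q n (le_refl n) h) :=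
      dif_pos (le_refl n)
    rw [hFn']
    refine Finset.sum_congr rfl fun h _ => ?_
    have hpre : ∀ (r : (Fin n → 𝒳) → ℝ), prefP r n (le_refl n) h = r h := by
      intro r
      unfold prefP
      refine sum_ite_eq_cl h r _ (fun g => ?_)
      constructor
      · intro hg
        funext i
        exact hg i
      · intro hg i
        rw [hg]
        rfl
    rw [hpre p, hpre q]
  have hF0 : F 0 = 0 := by
    have hF0' : F 0 = ∑ h : Fin 0 → 𝒳,
        prefP p 0 (Nat.zero_le n) h *
          Real.log (prefP p 0 (Nat.zero_le n) h / prefP q 0 (Nat.zero_le n) h) :=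
      dif_pos (Nat.zero_le n)
    rw [hF0']
    refine Finset.sum_eq_zero fun h _ => ?_
    have hpre : ∀ (r : (Fin n → 𝒳) → ℝ) (hr1 : ∑ g, r g = 1),
        prefP r 0 (Nat.zero_le n) h = 1 := by
      intro r hr1
      unfold prefP
      rw [Finset.sum_congr rfl fun g _ => if_pos (fun i => i.elim0)]
      exact hr1
    rw [hpre p hps, hpre q hqs]
    simp
  rw [hFn, hF0, sub_zero]

lemma sum_ite_inst {α β : Type*} [Fintype α] [AddCommMonoid β] (c : α → Prop)
    {D1 D2 : DecidablePred c} (f : α → β) :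
    ∑ x, @ite β (c x) (D1 x) (f x) 0 = ∑ x, @ite β (c x) (D2 x) (f x) 0 :=
  Finset.sum_congr rfl fun x _ => by rw [Subsingleton.elim (D1 x) (D2 x)]

lemma meas_fiber {Ψ 𝒳 : Type*} [Fintype Ψ] [Fintype 𝒳]
    [MeasurableSpace Ψ] [MeasurableSingletonClass Ψ]
    [MeasurableSpace 𝒳] [MeasurableSingletonClass 𝒳] {n : ℕ}
    (μ : Measure (Ψ × (Fin n → 𝒳))) [IsFiniteMeasure μ] (g : Fin n → 𝒳) :
    (μ {pr | pr.2 = g}).toReal = ∑ s, (μ {(s, g)}).toReal := by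
  rw [meas_toReal_sum]
  have := sum_ite_snd (fun p : Ψ × (Fin n → 𝒳) => (μ {p}).toReal) (· = g)
  simp only [Set.mem_setOf_eq]
  refine Eq.trans (Finset.sum_congr rfl fun x _ => ?_) (this.trans ?_)
  · by_cases hx : x.2 = g <;> simp [hx]
  · exact sum_ite_eq_cl g _ _ (fun x => Iff.rfl)

lemma meas_pref_eq {Ψ 𝒳 : Type*} [Fintype Ψ] [Fintype 𝒳]
    [MeasurableSpace Ψ] [MeasurableSingletonClass Ψ]
    [MeasurableSpace 𝒳] [MeasurableSingletonClass 𝒳] {n : ℕ}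
    (μ : Measure (Ψ × (Fin n → 𝒳))) [IsFiniteMeasure μ] (t : Fin n)
    (h : Fin t.val → 𝒳) :
    (μ {pr | ∀ i : Fin t.val, pr.2 (Fin.castLE t.isLt.le i) = h i}).toReal
      = prefP (fun g => (μ {pr | pr.2 = g}).toReal) t.val t.isLt.le h := by
  have h1 := meas_snd_toReal μ
    (fun g => ∀ i : Fin t.val, g (Fin.castLE t.isLt.le i) = h i)
  exact h1.trans (sum_ite_inst _ _)

lemma condLaw_eq {Ψ 𝒳 : Type*} [Fintype Ψ] [Fintype 𝒳]
    [MeasurableSpace Ψ] [MeasurableSingletonClass Ψ]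
    [MeasurableSpace 𝒳] [MeasurableSingletonClass 𝒳] {n : ℕ}
    (μ : Measure (Ψ × (Fin n → 𝒳))) [IsFiniteMeasure μ] (t : Fin n)
    (h : Fin t.val → 𝒳) :
    condLaw μ t h = fun x =>
      (∑ g, if (∀ i : Fin t.val, g (Fin.castLE t.isLt.le i) = h i) ∧ g t = x
          then (μ {pr | pr.2 = g}).toReal else 0) /
        prefP (fun g => (μ {pr | pr.2 = g}).toReal) t.val t.isLt.le h := by
  funext x
  unfold condLaw
  congr 1
  · have h1 := meas_snd_toReal μ
      (fun g => (∀ i : Fin t.val, g (Fin.castLE t.isLt.le i) = h i) ∧ g t = x)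
    exact h1.trans (sum_ite_inst _ _)
  · exact meas_pref_eq μ t h

/-- **Misspecified prior error bound** (paper, Theorem 8, via the chain rule and the data
processing inequality for KL divergence).  Let `π ≪ π̃` be priors on `Ψ`, `κ` a common
likelihood kernel, and `μ`, `ν` the induced joint laws on `Ψ × 𝒳^n`.  Then the cumulated
expected KL divergence between the `μ`- and `ν`-posterior-predictive distributions equals
the KL divergence between the marginal laws of the data `X = (X_1,…,X_n)`, which is at
most `d_KL(π ‖ π̃)`. -/
theorem misspecified_prior_error_bound
    {Ψ 𝒳 : Type*} [Fintype Ψ] [Nonempty Ψ] [Fintype 𝒳] [Nonempty 𝒳]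
    [MeasurableSpace Ψ] [MeasurableSingletonClass Ψ]
    [MeasurableSpace 𝒳] [MeasurableSingletonClass 𝒳]
    (n : ℕ) (hn : 1 ≤ n)
    (π π' : Measure Ψ) [IsProbabilityMeasure π] [IsProbabilityMeasure π']
    (hsupp : ∀ s : Ψ, 0 < π {s} → 0 < π' {s})
    (κ : Ψ → Measure (Fin n → 𝒳)) (hκ : ∀ s, IsProbabilityMeasure (κ s))
    (μ ν : Measure (Ψ × (Fin n → 𝒳)))
    [IsProbabilityMeasure μ] [IsProbabilityMeasure ν]
    (hμ : ∀ p : Ψ × (Fin n → 𝒳), μ {p} = π {p.1} * κ p.1 {p.2})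
    (hν : ∀ p : Ψ × (Fin n → 𝒳), ν {p} = π' {p.1} * κ p.1 {p.2}) :
    (∑ t : Fin n, ∑ h : Fin t.val → 𝒳,
        (μ {p | ∀ i : Fin t.val, p.2 (Fin.castLE t.isLt.le i) = h i}).toReal *
          klFin (condLaw μ t h) (condLaw ν t h)
      = klFin (fun g : Fin n → 𝒳 => (μ {p | p.2 = g}).toReal)
              (fun g : Fin n → 𝒳 => (ν {p | p.2 = g}).toReal)) ∧
    klFin (fun g : Fin n → 𝒳 => (μ {p | p.2 = g}).toReal)
          (fun g : Fin n → 𝒳 => (ν {p | p.2 = g}).toReal)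
      ≤ klFin (fun s => (π {s}).toReal) (fun s => (π' {s}).toReal) := by
  classical
  -- marginal identities
  have hpmarg : ∀ g : Fin n → 𝒳,
      (μ {pr | pr.2 = g}).toReal = ∑ s, (π {s}).toReal * ((κ s) {g}).toReal := by
    intro g
    rw [meas_fiber]
    refine Finset.sum_congr rfl fun s _ => ?_
    rw [hμ (s, g)]
    exact ENNReal.toReal_mul
  have hqmarg : ∀ g : Fin n → 𝒳,
      (ν {pr | pr.2 = g}).toReal = ∑ s, (π' {s}).toReal * ((κ s) {g}).toReal := by
    intro g
    rw [meas_fiber]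
    refine Finset.sum_congr rfl fun s _ => ?_
    rw [hν (s, g)]
    exact ENNReal.toReal_mul
  have hrac : ∀ s, (π' {s}).toReal = 0 → (π {s}).toReal = 0 := by
    intro s h0
    have h1 : π' {s} = 0 := by
      rcases (ENNReal.toReal_eq_zero_iff _).1 h0 with h | h
      · exact h
      · exact absurd h (measure_ne_top π' _)
    have h2 : π {s} = 0 := by
      by_contra hne
      have := hsupp s (pos_iff_ne_zero.2 hne)
      rw [h1] at this
      exact lt_irrefl 0 this
    rw [h2]
    simp
  have hksum : ∀ s, ∑ g : Fin n → 𝒳, ((κ s) {g}).toReal = 1 := by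
    intro s
    haveI := hκ s
    have h1 := meas_toReal_sum (κ s) Set.univ
    simpa [measure_univ] using h1.symm
  have hrsum : ∑ s, (π {s}).toReal = 1 := by
    have h1 := meas_toReal_sum π Set.univ
    simpa [measure_univ] using h1.symm
  have hrsum' : ∑ s, (π' {s}).toReal = 1 := by
    have h1 := meas_toReal_sum π' Set.univ
    simpa [measure_univ] using h1.symm
  have hpsum : ∑ g : Fin n → 𝒳, (μ {pr | pr.2 = g}).toReal = 1 := by
    rw [Finset.sum_congr rfl fun g _ => hpmarg g, Finset.sum_comm]
    rw [Finset.sum_congr rfl fun s _ => by rw [← Finset.mul_sum, hksum s, mul_one]]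
    exact hrsum
  have hqsum : ∑ g : Fin n → 𝒳, (ν {pr | pr.2 = g}).toReal = 1 := by
    rw [Finset.sum_congr rfl fun g _ => hqmarg g, Finset.sum_comm]
    rw [Finset.sum_congr rfl fun s _ => by rw [← Finset.mul_sum, hksum s, mul_one]]
    exact hrsum'
  have hac : ∀ g : Fin n → 𝒳,
      (ν {pr | pr.2 = g}).toReal = 0 → (μ {pr | pr.2 = g}).toReal = 0 := by
    intro g h0
    rw [hqmarg g] at h0
    rw [hpmarg g]
    refine Finset.sum_eq_zero fun s _ => ?_
    have hz := sum_eq_zero_of_nonneg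
      (fun i _ => mul_nonneg ENNReal.toReal_nonneg ENNReal.toReal_nonneg) h0 s
      (Finset.mem_univ s)
    rcases mul_eq_zero.1 hz with h | h
    · rw [hrac s h, zero_mul]
    · rw [h, mul_zero]
  constructor
  · -- chain rule
    have hL : ∀ (t : Fin n) (h : Fin t.val → 𝒳),
        (μ {p | ∀ i : Fin t.val, p.2 (Fin.castLE t.isLt.le i) = h i}).toReal *
            klFin (condLaw μ t h) (condLaw ν t h)
          = prefP (fun g => (μ {pr | pr.2 = g}).toReal) t.val t.isLt.le h *
              klFin
                (fun x => (∑ g, if (∀ i : Fin t.val, g (Fin.castLE t.isLt.le i) = h i)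
                    ∧ g t = x then (μ {pr | pr.2 = g}).toReal else 0) /
                  prefP (fun g => (μ {pr | pr.2 = g}).toReal) t.val t.isLt.le h)
                (fun x => (∑ g, if (∀ i : Fin t.val, g (Fin.castLE t.isLt.le i) = h i)
                    ∧ g t = x then (ν {pr | pr.2 = g}).toReal else 0) /
                  prefP (fun g => (ν {pr | pr.2 = g}).toReal) t.val t.isLt.le h) := by
      intro t h
      rw [meas_pref_eq μ t h, condLaw_eq μ t h, condLaw_eq ν t h]
    rw [Finset.sum_congr rfl fun t _ => Finset.sum_congr rfl fun h _ => hL t h]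
    exact chainRuleFin (fun g => (μ {pr | pr.2 = g}).toReal)
      (fun g => (ν {pr | pr.2 = g}).toReal)
      (fun g => ENNReal.toReal_nonneg) (fun g => ENNReal.toReal_nonneg)
      hac hpsum hqsum
  · -- data processing
    have hpfun : (fun g : Fin n → 𝒳 => (μ {p | p.2 = g}).toReal)
        = fun g => ∑ s, (π {s}).toReal * ((κ s) {g}).toReal := funext hpmarg
    have hqfun : (fun g : Fin n → 𝒳 => (ν {p | p.2 = g}).toReal)
        = fun g => ∑ s, (π' {s}).toReal * ((κ s) {g}).toReal := funext hqmarg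
    rw [hpfun, hqfun]
    exact dpiFin (fun s => (π {s}).toReal) (fun s => (π' {s}).toReal)
      (fun s g => ((κ s) {g}).toReal)
      (fun s => ENNReal.toReal_nonneg) (fun s => ENNReal.toReal_nonneg)
      (fun s g => ENNReal.toReal_nonneg) hksum hrac
end
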